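/- Let u : ℝ² → ℂ be integrable (u ∈ L¹(ℝ²)), let θ ∈ ℝ² be a unit vector, and let θ⊥ denote its rotation by π/2 (i.e., θ⊥ = (-θ₂, θ₁)). Then for every s ∈ ℝ: ∫_{ℝ²} e^{i s ⟨θ, q⟩} u(q) dq = ∫_{ℝ} e^{i s y} ( ∫_{ℝ} u(y θ + t θ⊥) dt ) dy, where the inner integral exists for almost every y. -/

import Mathlib

open MeasureTheory Complex

noncomputable def rot2 (θ : ℝ × ℝ) : (ℝ × ℝ) →ₗ[ℝ] (ℝ × ℝ) where
  toFun p := (p.1 * θ.1 - p.2 * θ.2, p.1 * θ.2 + p.2 * θ.1)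
  map_add' p q := by simp [Prod.ext_iff]; constructor <;> ring
  map_smul' c p := by simp [Prod.ext_iff]; constructor <;> ring

lemma rot2_det (θ : ℝ × ℝ) : LinearMap.det (rot2 θ) = θ.1 ^ 2 + θ.2 ^ 2 := by
  rw [← LinearMap.det_toMatrix (Module.Basis.finTwoProd ℝ), Matrix.det_fin_two]
  simp [LinearMap.toMatrix_apply, rot2, Module.Basis.finTwoProd_zero, Module.Basis.finTwoProd_one,
    Module.Basis.coe_finTwoProd_repr]
  ring

lemma rot2_measurePreserving (θ : ℝ × ℝ) (hθ : θ.1 ^ 2 + θ.2 ^ 2 = 1) :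
    MeasurePreserving (rot2 θ) (volume : Measure (ℝ × ℝ)) volume := by
  have hdet : LinearMap.det (rot2 θ) = 1 := by rw [rot2_det, hθ]
  refine ⟨(LinearMap.continuous_of_finiteDimensional _).measurable, ?_⟩
  rw [Measure.map_linearMap_addHaar_eq_smul_addHaar _ (by rw [hdet]; norm_num), hdet]
  simp

theorem fourier_slice_radon_2D
    (u : ℝ × ℝ → ℂ) (hu : Integrable u)
    (θ : ℝ × ℝ) (hθ : θ.1 ^ 2 + θ.2 ^ 2 = 1) (s : ℝ) :
    (∀ᵐ y : ℝ, Integrable (fun t : ℝ => u (y * θ.1 - t * θ.2, y * θ.2 + t * θ.1))) ∧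
    ∫ q : ℝ × ℝ, Complex.exp (Complex.I * s * (θ.1 * q.1 + θ.2 * q.2)) * u q
      = ∫ y : ℝ, Complex.exp (Complex.I * s * y) *
          ∫ t : ℝ, u (y * θ.1 - t * θ.2, y * θ.2 + t * θ.1) := by
  have hmp := rot2_measurePreserving θ hθ
  have hrot : ⇑(rot2 θ) = fun p : ℝ × ℝ => (p.1 * θ.1 - p.2 * θ.2, p.1 * θ.2 + p.2 * θ.1) := rfl
  -- integrability of u ∘ rot2 θ
  have huL : Integrable (u ∘ rot2 θ) (volume : Measure (ℝ × ℝ)) := by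
    rw [← integrable_map_measure (by rw [hmp.map_eq]; exact hu.aestronglyMeasurable)
      hmp.measurable.aemeasurable, hmp.map_eq]
    exact hu
  have huL' : Integrable (u ∘ rot2 θ) ((volume : Measure ℝ).prod volume) := by
    rwa [← Measure.volume_eq_prod]
  have hae := huL'.prod_right_ae
  refine ⟨by simpa [hrot, Function.comp] using hae, ?_⟩
  -- the full integrand
  have hexpnorm : ∀ x : ℝ, ‖Complex.exp (Complex.I * s * x)‖ = 1 := by
    intro x
    rw [Complex.norm_exp]
    simp
  have hexpnorm2 : ∀ q : ℝ × ℝ,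
      ‖Complex.exp (Complex.I * s * (θ.1 * q.1 + θ.2 * q.2))‖ = 1 := by
    intro q
    rw [Complex.norm_exp]
    simp
  have hfi : Integrable (fun q : ℝ × ℝ =>
      Complex.exp (Complex.I * s * (θ.1 * q.1 + θ.2 * q.2)) * u q) := by
    refine hu.bdd_mul ?_ (c := 1) (Filter.Eventually.of_forall fun q => le_of_eq (hexpnorm2 q))
    exact (Complex.continuous_exp.comp (by continuity)).aestronglyMeasurable
  -- change of variables
  have hchg : ∫ q : ℝ × ℝ, Complex.exp (Complex.I * s * (θ.1 * q.1 + θ.2 * q.2)) * u q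
      = ∫ p : ℝ × ℝ, Complex.exp (Complex.I * s *
          (θ.1 * (rot2 θ p).1 + θ.2 * (rot2 θ p).2)) * u (rot2 θ p) := by
    rw [← integral_map (f := fun q : ℝ × ℝ =>
        Complex.exp (Complex.I * s * (θ.1 * q.1 + θ.2 * q.2)) * u q)
      hmp.measurable.aemeasurable
      (hmp.map_eq.symm ▸ hfi.aestronglyMeasurable), hmp.map_eq]
  -- simplify the composed integrand
  have hC : (θ.1 : ℂ) ^ 2 + (θ.2 : ℂ) ^ 2 = 1 := by exact_mod_cast congrArg Complex.ofReal hθ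
  have hcomp : ∀ p : ℝ × ℝ, Complex.exp (Complex.I * s *
        (θ.1 * (rot2 θ p).1 + θ.2 * (rot2 θ p).2)) * u (rot2 θ p)
      = Complex.exp (Complex.I * s * p.1) * u (rot2 θ p) := by
    intro p
    simp only [hrot]
    congr 2
    push_cast
    linear_combination Complex.I * s * p.1 * hC
  have hgint : Integrable (fun p : ℝ × ℝ => Complex.exp (Complex.I * s * p.1) * u (rot2 θ p))
      ((volume : Measure ℝ).prod volume) := by
    refine huL'.bdd_mul ?_ (c := 1) (Filter.Eventually.of_forall fun q => le_of_eq (hexpnorm _))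
    exact (Complex.continuous_exp.comp (by continuity)).aestronglyMeasurable
  rw [hchg]
  calc (∫ p : ℝ × ℝ, Complex.exp (Complex.I * s *
          (θ.1 * (rot2 θ p).1 + θ.2 * (rot2 θ p).2)) * u (rot2 θ p))
      = ∫ p : ℝ × ℝ, Complex.exp (Complex.I * s * p.1) * u (rot2 θ p) := by
        simp_rw [hcomp]
    _ = ∫ y : ℝ, ∫ t : ℝ, Complex.exp (Complex.I * s * y) * u (rot2 θ (y, t)) := by
        rw [Measure.volume_eq_prod]
        exact integral_prod _ hgint
    _ = ∫ y : ℝ, Complex.exp (Complex.I * s * y) *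
          ∫ t : ℝ, u (y * θ.1 - t * θ.2, y * θ.2 + t * θ.1) := by
        simp_rw [integral_const_mul, hrot]
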